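/- arXiv:1209.2460 — 2 statements merged into one kernel-verified Lean document; each statement's English description precedes it below -/
import Mathlib

section
/- Every P^k-neighbor Π of Λ (for p = P∩Z_F coprime to d(Λ)) equals Λ(P,X) for some X ⊆ Λ isotropic modulo P with dim X/PX = k; one may take X generated by representatives of PΠ modulo P(Π ∩ Λ). -/
open scoped nonZeroDivisors

section

variable (O : Type*) [CommRing O] [IsDedekindDomain O]
  (L : Type*) [Field L] [Algebra O L] [IsFractionRing O L]
  (V : Type*) [AddCommGroup V] [Module L V] [Module O V] [IsScalarTower O L V]
  (φ : V → V → L) (Λ : Submodule O V) (P Pbar : Ideal O) (k : ℕ)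

/-- `X` is a `k`-dimensional isotropic subspace of `Λ` modulo `P` (isotropic modulo
`q = P·P̄`, with `dim_{Z_L/P} X/PX = k`). -/
def IsIsotropicOfDim (X : Submodule O V) : Prop :=
  X ≤ Λ ∧ X.FG ∧
  (∀ x ∈ X, ∀ y ∈ X,
    φ x y ∈ Submodule.map (Algebra.linearMap O L) ((P * Pbar : Ideal O) : Submodule O O)) ∧
  Nonempty ((↥X ⧸ (P • (⊤ : Submodule O ↥X))) ≃ₗ[O] (Fin k → O ⧸ P))

/-- `Π` is a `P^k`-neighbor of `Λ`: an integral lattice with `Π/(Λ∩Π) ≅ (Z_L/P)^k` and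
`Λ/(Λ∩Π) ≅ (Z_L/P̄)^k`. -/
def IsPkNeighbor (Pi : Submodule O V) : Prop :=
  (∀ x ∈ Pi, ∀ y ∈ Pi, φ x y ∈ (algebraMap O L).range) ∧
  Nonempty ((↥Pi ⧸ ((Λ ⊓ Pi).comap Pi.subtype)) ≃ₗ[O] (Fin k → O ⧸ P)) ∧
  Nonempty ((↥Λ ⧸ ((Λ ⊓ Pi).comap Λ.subtype)) ≃ₗ[O] (Fin k → O ⧸ Pbar))

end

theorem aux_uniformizer (O : Type*) [CommRing O] [IsDedekindDomain O]
    (P : Ideal O) (hP : P.IsPrime) (hP0 : P ≠ ⊥) :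
    ∃ π : O, π ∈ P ∧ π ∉ P ^ 2 ∧ P = Ideal.span {π} ⊔ P ^ 2 := by
  have hlt : P ^ 2 < P := by
    simpa using Ideal.pow_lt_self P hP0 hP.ne_top 2 le_rfl
  obtain ⟨π, hπP, hππ⟩ := SetLike.exists_of_lt hlt
  refine ⟨π, hπP, hππ, ?_⟩
  set J := Ideal.span {π} ⊔ P ^ 2 with hJdef
  have hJP : J ≤ P := sup_le ((Ideal.span_singleton_le_iff_mem P).mpr hπP) hlt.le
  have hd1 : J ∣ P ^ 2 := Ideal.dvd_iff_le.mpr le_sup_right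
  have hd2 : P ∣ J := Ideal.dvd_iff_le.mpr hJP
  obtain ⟨K, hK⟩ := hd2
  obtain ⟨C, hC⟩ := hd1
  have hPne : (P : Ideal O) ≠ 0 := by simpa using hP0
  have hKC : P = K * C := by
    apply mul_left_cancel₀ hPne
    calc P * P = P ^ 2 := (sq P).symm
    _ = J * C := hC
    _ = P * K * C := by rw [hK]
    _ = P * (K * C) := by ring
  have hprime : Prime P := Ideal.prime_of_isPrime hP0 hP
  rcases hprime.irreducible.isUnit_or_isUnit hKC with hu | hu
  · rw [Ideal.isUnit_iff] at hu
    rw [hK, hu, Ideal.mul_top]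
  · rw [Ideal.isUnit_iff] at hu
    exfalso
    apply hππ
    have : P = K := by rw [hKC, hu, Ideal.mul_top]
    have : J = P ^ 2 := by rw [hK, ← this, sq]
    rw [← this]
    exact Submodule.mem_sup_left (Ideal.mem_span_singleton_self π)

theorem aux_japi (O : Type*) [CommRing O] [IsDedekindDomain O]
    (L : Type*) [Field L] [Algebra O L] [IsFractionRing O L]
    (P : Ideal O) (hP : P.IsPrime) (hP0 : P ≠ ⊥)
    (π : O) (hπP : π ∈ P) (hππ : π ∉ P ^ 2) :
    ∃ j p : O, ∃ a : L, j + p = 1 ∧ p ∈ P ∧ j ∉ P ∧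
      a ∈ ((((P : FractionalIdeal O⁰ L))⁻¹ : FractionalIdeal O⁰ L) : Submodule O L) ∧
      algebraMap O L j = a * algebraMap O L π := by
  have halg : Function.Injective (algebraMap O L) := IsFractionRing.injective O L
  have hPne : (P : FractionalIdeal O⁰ L) ≠ 0 := by
    rw [FractionalIdeal.coeIdeal_ne_zero]; exact hP0
  set I₀ : FractionalIdeal O⁰ L :=
    FractionalIdeal.spanSingleton O⁰ (algebraMap O L π) * (P : FractionalIdeal O⁰ L)⁻¹ with hI₀
  have hsle : FractionalIdeal.spanSingleton O⁰ (algebraMap O L π) ≤ (P : FractionalIdeal O⁰ L) :=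
    FractionalIdeal.spanSingleton_le_iff_mem.mpr (FractionalIdeal.mem_coeIdeal_of_mem O⁰ hπP)
  have hI₀le : I₀ ≤ 1 := by
    calc I₀ ≤ (P : FractionalIdeal O⁰ L) * (P : FractionalIdeal O⁰ L)⁻¹ :=
          mul_left_mono hsle
    _ = 1 := mul_inv_cancel₀ hPne
  obtain ⟨J₀, hJ₀⟩ := FractionalIdeal.le_one_iff_exists_coeIdeal.mp hI₀le
  have hJ₀P : ¬ J₀ ≤ P := by
    intro hle
    apply hππ
    have h1 : I₀ ≤ (P : FractionalIdeal O⁰ L) := by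
      rw [← hJ₀]; exact (FractionalIdeal.coeIdeal_le_coeIdeal L).mpr hle
    have h2 : I₀ * (P : FractionalIdeal O⁰ L) ≤
        (P : FractionalIdeal O⁰ L) * (P : FractionalIdeal O⁰ L) :=
      mul_left_mono h1
    have h3 : I₀ * (P : FractionalIdeal O⁰ L) =
        FractionalIdeal.spanSingleton O⁰ (algebraMap O L π) := by
      rw [hI₀, mul_assoc, inv_mul_cancel₀ hPne, mul_one]
    rw [h3] at h2
    have h4 : algebraMap O L π ∈
        ((P * P : Ideal O) : FractionalIdeal O⁰ L) := by
      rw [FractionalIdeal.coeIdeal_mul]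
      exact h2 (FractionalIdeal.mem_spanSingleton_self O⁰ _)
    obtain ⟨x, hx, hxe⟩ := (FractionalIdeal.mem_coeIdeal O⁰).mp h4
    rw [sq]
    rwa [← halg hxe]
  haveI hmax : P.IsMaximal := hP.isMaximal hP0
  have hsup : J₀ ⊔ P = ⊤ := by
    by_contra hne
    apply hJ₀P
    have h5 : P = P ⊔ J₀ := hmax.eq_of_le (by rwa [sup_comm J₀ P] at hne) le_sup_left
    intro x hx
    rw [h5]
    exact Submodule.mem_sup_right hx
  have h1 : (1 : O) ∈ J₀ ⊔ P := by rw [hsup]; trivial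
  obtain ⟨j, hj, p, hp, hjp⟩ := Submodule.mem_sup.mp h1
  have hjnP : j ∉ P := fun hjP => hP.ne_top (Ideal.eq_top_of_isUnit_mem _
    (by rw [← hjp]; exact Ideal.add_mem _ hjP hp) isUnit_one)
  have hjI : algebraMap O L j ∈ I₀ := by
    rw [← hJ₀]; exact FractionalIdeal.mem_coeIdeal_of_mem O⁰ hj
  rw [hI₀] at hjI
  obtain ⟨a, ha, hae⟩ := FractionalIdeal.mem_singleton_mul.mp hjI
  exact ⟨j, p, a, hjp, hp, hjnP, FractionalIdeal.mem_coe.mpr ha, by rw [hae, mul_comm]⟩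


set_option maxHeartbeats 2000000

/-- Every `P^k`-neighbor `Π` of `Λ` (for the prime below `P` coprime to `d(Λ)`) equals
`Λ(P,X)` for some `X ⊆ Λ` isotropic modulo `P` with `dim X/PX = k`; moreover one may take
`X` generated by representatives of `PΠ` modulo `P(Π ∩ Λ)`, i.e. with `X ⊆ PΠ` and
`PΠ ⊆ X + P(Λ ∩ Π)`. -/
theorem neighbor_is_isotropic_construction
    (O : Type*) [CommRing O] [IsDedekindDomain O]
    (L : Type*) [Field L] [Algebra O L] [IsFractionRing O L]
    (τ : O ≃+* O) (σ : L ≃+* L) (hσ : ∀ a, σ (σ a) = a)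
    (hστ : ∀ a : O, σ (algebraMap O L a) = algebraMap O L (τ a))
    (V : Type*) [AddCommGroup V] [Module L V] [Module O V] [IsScalarTower O L V]
    (φ : V → V → L)
    (haddl : ∀ x y z : V, φ (x + y) z = φ x z + φ y z)
    (hsmull : ∀ (a : L) (x y : V), φ (a • x) y = a * φ x y)
    (hherm : ∀ x y : V, φ y x = σ (φ x y))
    (Λ : Submodule O V)
    (hint : ∀ x ∈ Λ, ∀ y ∈ Λ, φ x y ∈ (algebraMap O L).range)
    (P : Ideal O) (hP : P.IsPrime) (hP0 : P ≠ ⊥)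
    (Pbar : Ideal O) (hPbar : Pbar = P.map τ)
    -- `p ∤ d(Λ)`: `φ` is nondegenerate on `Λ` modulo `P` and modulo `P̄`
    (hcopbar : ∀ y ∈ Λ, (∀ x ∈ Λ,
        φ x y ∈ Submodule.map (Algebra.linearMap O L) (Pbar : Submodule O O)) →
      y ∈ Pbar • Λ)
    (hcop : ∀ y ∈ Λ, (∀ x ∈ Λ,
        φ x y ∈ Submodule.map (Algebra.linearMap O L) (P : Submodule O O)) →
      y ∈ P • Λ)
    -- the neighbor construction `X ↦ Λ(P,X) = P⁻¹X + (Λ ∩ P̄·X^#)`,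
    -- where `P̄·X^# = {y ∈ V : φ(X,y) ⊆ P̄}`
    (Nf : Submodule O V → Submodule O V)
    (hNf : ∀ (X : Submodule O V) (y : V), y ∈ Nf X ↔ ∀ x ∈ X,
      φ x y ∈ Submodule.map (Algebra.linearMap O L) (Pbar : Submodule O O))
    (nbr : Submodule O V → Submodule O V)
    (hnbr : ∀ X : Submodule O V, nbr X = Submodule.span O {z : V | ∃ a ∈
      ((((P : FractionalIdeal O⁰ L))⁻¹ : FractionalIdeal O⁰ L) : Submodule O L),
      ∃ x ∈ X, z = a • x} ⊔ (Λ ⊓ Nf X))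
    (k : ℕ)
    (Pi : Submodule O V) (hPi : IsPkNeighbor O L V φ Λ P Pbar k Pi) :
    ∃ X : Submodule O V, IsIsotropicOfDim O L V φ Λ P Pbar k X ∧
      X ≤ P • Pi ∧ P • Pi ≤ X ⊔ P • (Λ ⊓ Pi) ∧ nbr X = Pi := by
  classical
  have halg : Function.Injective (algebraMap O L) := IsFractionRing.injective O L
  have htau : ∀ b : O, τ (τ b) = b := by
    intro b; apply halg; rw [← hστ, ← hστ, hσ]
  have hsl : ∀ (c : O) (x y : V), φ (c • x) y = algebraMap O L c * φ x y := by
    intro c x y; rw [← algebraMap_smul L c x, hsmull]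
  have haddr : ∀ x y z : V, φ x (y + z) = φ x y + φ x z := by
    intro x y z; rw [hherm, haddl, map_add, ← hherm, ← hherm]
  have hsr : ∀ (c : O) (x y : V), φ x (c • y) = algebraMap O L (τ c) * φ x y := by
    intro c x y
    rw [hherm, hsl, map_mul, hστ, ← hherm]
  have hzl : ∀ y : V, φ 0 y = 0 := by
    intro y
    have h := haddl 0 0 y
    rw [add_zero] at h
    exact (left_eq_add.mp h)
  have hzr : ∀ x : V, φ x 0 = 0 := by
    intro x; rw [hherm, hzl, map_zero]
  have hqsmul : ∀ (I : Ideal O) (q c : O),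
      q • Ideal.Quotient.mk I c = Ideal.Quotient.mk I (q * c) := by
    intro I q c
    rw [← Ideal.Quotient.mk_eq_mk, ← Ideal.Quotient.mk_eq_mk, ← Submodule.Quotient.mk_smul,
      smul_eq_mul]
  have hkill : ∀ (I : Ideal O) (q : O), q ∈ I → ∀ (ξ : Fin k → O ⧸ I), q • ξ = 0 := by
    intro I q hq ξ; funext i
    obtain ⟨c, hc⟩ := Ideal.Quotient.mk_surjective (ξ i)
    rw [_root_.Pi.smul_apply, ← hc, hqsmul I, _root_.Pi.zero_apply, Ideal.Quotient.eq_zero_iff_mem]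
    exact Ideal.mul_mem_right c I hq
  have hPPbar : ∀ b, b ∈ P → τ b ∈ Pbar := fun b hb => hPbar ▸ Ideal.mem_map_of_mem _ hb
  have hPbarP : ∀ b, b ∈ Pbar → τ b ∈ P := by
    intro b hb
    rw [hPbar] at hb
    obtain ⟨x, hx, hxe⟩ := (Ideal.mem_map_iff_of_surjective (τ : O →+* O) τ.surjective).mp hb
    rw [← hxe]
    show τ (τ x) ∈ P
    rw [htau]; exact hx
  unfold IsPkNeighbor at hPi
  set M := Λ ⊓ Pi with hM
  obtain ⟨hintPi, ⟨e₂⟩, ⟨e₃⟩⟩ := hPi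
  have hMΛ : M ≤ Λ := inf_le_left
  have hMPi : M ≤ Pi := inf_le_right
  have hPPiM : P • Pi ≤ M := by
    refine Submodule.smul_le.mpr fun q hq x hx => ?_
    have h1 : Submodule.Quotient.mk (p := M.comap Pi.subtype) (q • ⟨x, hx⟩) = 0 := by
      apply e₂.injective
      rw [map_zero, Submodule.Quotient.mk_smul, map_smul, hkill P q hq]
    rw [Submodule.Quotient.mk_eq_zero] at h1
    exact h1
  have hPbarΛM : Pbar • Λ ≤ M := by
    refine Submodule.smul_le.mpr fun q hq x hx => ?_
    have h1 : Submodule.Quotient.mk (p := M.comap Λ.subtype) (q • ⟨x, hx⟩) = 0 := by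
      apply e₃.injective
      rw [map_zero, Submodule.Quotient.mk_smul, map_smul, hkill Pbar q hq]
    rw [Submodule.Quotient.mk_eq_zero] at h1
    exact h1
  have hPΛ_eq : P • Λ = Pbar • Λ := by
    apply le_antisymm
    · intro y hy
      have hyΛ : y ∈ Λ := Submodule.smul_le_right hy
      apply hcopbar y hyΛ
      intro x hx
      refine Submodule.smul_induction_on hy ?_ ?_
      · intro q hq w hw
        rw [hsr]
        obtain ⟨c, hc⟩ := hint x hx w hw
        rw [← hc, ← map_mul]
        exact ⟨τ q * c, Ideal.mul_mem_right c _ (hPPbar q hq), rfl⟩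
      · intro z w hz hw
        rw [haddr]; exact Submodule.add_mem _ hz hw
    · intro y hy
      have hyΛ : y ∈ Λ := Submodule.smul_le_right hy
      apply hcop y hyΛ
      intro x hx
      refine Submodule.smul_induction_on hy ?_ ?_
      · intro q hq w hw
        rw [hsr]
        obtain ⟨c, hc⟩ := hint x hx w hw
        rw [← hc, ← map_mul]
        exact ⟨τ q * c, Ideal.mul_mem_right c _ (hPbarP q hq), rfl⟩
      · intro z w hz hw
        rw [haddr]; exact Submodule.add_mem _ hz hw
  rcases Nat.eq_zero_or_pos k with hk0 | hkpos
  · -- k = 0 : Pi = Λ, take X = ⊥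
    subst hk0
    have hPiΛ : Pi ≤ Λ := by
      intro x hx
      have h1 : Submodule.Quotient.mk (p := M.comap Pi.subtype) ⟨x, hx⟩ = 0 := by
        apply e₂.injective
        exact Subsingleton.elim _ _
      rw [Submodule.Quotient.mk_eq_zero] at h1
      exact (Submodule.mem_inf.mp h1).1
    have hΛPi : Λ ≤ Pi := by
      intro x hx
      have h1 : Submodule.Quotient.mk (p := M.comap Λ.subtype) ⟨x, hx⟩ = 0 := by
        apply e₃.injective
        exact Subsingleton.elim _ _
      rw [Submodule.Quotient.mk_eq_zero] at h1
      exact (Submodule.mem_inf.mp h1).2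
    refine ⟨⊥, ?_, bot_le, ?_, ?_⟩
    · unfold IsIsotropicOfDim
      refine ⟨bot_le, Submodule.fg_bot, ?_, ?_⟩
      · intro x hx y hy
        rw [Submodule.mem_bot] at hx
        rw [hx, hzl]
        exact Submodule.zero_mem _
      · haveI hbs : Subsingleton (↥(⊥ : Submodule O V)) :=
          ⟨fun a b => Subtype.ext (by
            rw [(Submodule.mem_bot O).mp a.2, (Submodule.mem_bot O).mp b.2])⟩
        haveI : Subsingleton (↥(⊥ : Submodule O V) ⧸
            (P • (⊤ : Submodule O ↥(⊥ : Submodule O V)))) :=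
          (Submodule.Quotient.mk_surjective _).subsingleton
        refine ⟨{ toFun := fun _ => 0, map_add' := by intros; simp,
                  map_smul' := by intros; simp, invFun := fun _ => 0,
                  left_inv := fun x => Subsingleton.elim _ _,
                  right_inv := fun x => Subsingleton.elim _ _ }⟩
    · rw [bot_sup_eq]
      exact Submodule.smul_mono le_rfl (le_inf hPiΛ le_rfl)
    · rw [hnbr]
      apply le_antisymm
      · apply sup_le
        · rw [Submodule.span_le]
          rintro z ⟨a, ha, x, hx, rfl⟩
          rw [Submodule.mem_bot] at hx
          rw [hx, smul_zero]
          exact Submodule.zero_mem _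
        · exact le_trans inf_le_left hΛPi
      · intro x hx
        apply Submodule.mem_sup_right
        refine Submodule.mem_inf.mpr ⟨hPiΛ hx, (hNf ⊥ x).mpr ?_⟩
        intro x' hx'
        rw [Submodule.mem_bot] at hx'
        rw [hx', hzl]
        exact Submodule.zero_mem _
  · -- main case
    have hPΛM : P • Λ ≤ M := le_trans (le_of_eq hPΛ_eq) hPbarΛM
    have hPle : P ≤ Pbar := by
      intro q hq
      have h0 : ∀ η : ↥Λ ⧸ (M.comap Λ.subtype), q • η = 0 := by
        intro η
        obtain ⟨z, rfl⟩ := Submodule.Quotient.mk_surjective _ η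
        rw [← Submodule.Quotient.mk_smul, Submodule.Quotient.mk_eq_zero]
        exact Submodule.mem_comap.mpr (hPΛM (Submodule.smul_mem_smul hq z.2))
      set δ : Fin k → O ⧸ Pbar := _root_.Pi.single (⟨0, hkpos⟩ : Fin k) (1 : O ⧸ Pbar) with hδ
      have h1 : q • δ = 0 := by
        calc q • δ = q • (e₃ (e₃.symm δ)) := by rw [e₃.apply_symm_apply]
        _ = e₃ (q • e₃.symm δ) := (map_smul e₃ q _).symm
        _ = e₃ 0 := by rw [h0]
        _ = 0 := map_zero e₃
      have h2 := congrFun h1 ⟨0, hkpos⟩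
      rw [_root_.Pi.smul_apply, hδ, _root_.Pi.single_eq_same, _root_.Pi.zero_apply] at h2
      rw [show (1 : O ⧸ Pbar) = Ideal.Quotient.mk Pbar 1 from (map_one _).symm,
        hqsmul Pbar, mul_one, Ideal.Quotient.eq_zero_iff_mem] at h2
      exact h2
    have hPbar_ne : Pbar ≠ ⊤ := by
      intro htop
      rw [hPbar] at htop
      have h1 : (1 : O) ∈ P.map (τ : O →+* O) := htop ▸ Submodule.mem_top
      obtain ⟨x, hx, hxe⟩ := (Ideal.mem_map_iff_of_surjective (τ : O →+* O) τ.surjective).mp h1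
      apply hP.ne_top
      apply Ideal.eq_top_of_isUnit_mem _ hx
      rw [show x = (1 : O) from τ.injective (by rw [map_one]; exact hxe)]
      exact isUnit_one
    have hPeq : P = Pbar := (hP.isMaximal hP0).eq_of_le hPbar_ne hPle
    subst hPeq
    have hPfne : (P : FractionalIdeal O⁰ L) ≠ 0 := by
      rw [FractionalIdeal.coeIdeal_ne_zero]; exact hP0
    obtain ⟨π, hπP, hππ, hPdec⟩ := aux_uniformizer O P hP hP0
    obtain ⟨j, p, a, hjp1, hpP, hjnP, haP, hja⟩ := aux_japi O L P hP hP0 π hπP hππ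
    -- representatives
    choose u hu using fun i : Fin k =>
      Submodule.Quotient.mk_surjective (M.comap Pi.subtype)
        (e₂.symm (_root_.Pi.single i 1 : Fin k → O ⧸ P))
    choose yy hyy using fun i : Fin k =>
      Submodule.Quotient.mk_surjective (M.comap Λ.subtype)
        (e₃.symm (_root_.Pi.single i 1 : Fin k → O ⧸ P))
    have hsingle : ∀ (d : Fin k → O),
        (∑ i, d i • (_root_.Pi.single i 1 : Fin k → O ⧸ P)) = fun l => Ideal.Quotient.mk P (d l) := by
      intro d; funext l
      rw [Finset.sum_apply]
      rw [Finset.sum_eq_single l]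
      · rw [_root_.Pi.smul_apply, _root_.Pi.single_eq_same,
          show (1 : O ⧸ P) = Ideal.Quotient.mk P 1 from (map_one _).symm, hqsmul, mul_one]
      · intro b _ hb
        rw [_root_.Pi.smul_apply, _root_.Pi.single_eq_of_ne (Ne.symm hb), smul_zero]
      · intro hna; exact absurd (Finset.mem_univ l) hna
    have hcoordPi : ∀ (d : Fin k → O),
        e₂ (Submodule.Quotient.mk (∑ i, d i • u i)) = fun l => Ideal.Quotient.mk P (d l) := by
      intro d
      have h1 : Submodule.Quotient.mk (p := M.comap Pi.subtype) (∑ i, d i • u i)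
          = ∑ i, d i • Submodule.Quotient.mk (u i) := by
        rw [← Submodule.mkQ_apply, map_sum]
        simp only [map_smul, Submodule.mkQ_apply]
      rw [h1, map_sum]
      have h2 : ∀ i : Fin k, e₂ (d i • Submodule.Quotient.mk (u i))
          = d i • (_root_.Pi.single i 1 : Fin k → O ⧸ P) := by
        intro i; rw [map_smul, hu, e₂.apply_symm_apply]
      rw [Finset.sum_congr rfl (fun i _ => h2 i), hsingle]
    have hcoordΛ : ∀ (d : Fin k → O),
        e₃ (Submodule.Quotient.mk (∑ i, d i • yy i)) = fun l => Ideal.Quotient.mk P (d l) := by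
      intro d
      have h1 : Submodule.Quotient.mk (p := M.comap Λ.subtype) (∑ i, d i • yy i)
          = ∑ i, d i • Submodule.Quotient.mk (yy i) := by
        rw [← Submodule.mkQ_apply, map_sum]
        simp only [map_smul, Submodule.mkQ_apply]
      rw [h1, map_sum]
      have h2 : ∀ i : Fin k, e₃ (d i • Submodule.Quotient.mk (yy i))
          = d i • (_root_.Pi.single i 1 : Fin k → O ⧸ P) := by
        intro i; rw [map_smul, hyy, e₃.apply_symm_apply]
      rw [Finset.sum_congr rfl (fun i _ => h2 i), hsingle]
    have hdecPi : ∀ x : ↥Pi, ∃ d : Fin k → O, x - ∑ i, d i • u i ∈ M.comap Pi.subtype := by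
      intro x
      choose d hd using fun i =>
        Ideal.Quotient.mk_surjective (e₂ (Submodule.Quotient.mk (p := M.comap Pi.subtype) x) i)
      refine ⟨d, ?_⟩
      rw [← Submodule.Quotient.mk_eq_zero]
      apply e₂.injective
      rw [map_zero, ← Submodule.mkQ_apply, map_sub, map_sub, Submodule.mkQ_apply,
        Submodule.mkQ_apply, hcoordPi]
      have h3 : e₂ (Submodule.Quotient.mk x) = fun l => Ideal.Quotient.mk P (d l) :=
        funext fun l => (hd l).symm
      rw [← h3, sub_self]
    have hdecΛ : ∀ x : ↥Λ, ∃ d : Fin k → O, x - ∑ i, d i • yy i ∈ M.comap Λ.subtype := by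
      intro x
      choose d hd using fun i =>
        Ideal.Quotient.mk_surjective (e₃ (Submodule.Quotient.mk (p := M.comap Λ.subtype) x) i)
      refine ⟨d, ?_⟩
      rw [← Submodule.Quotient.mk_eq_zero]
      apply e₃.injective
      rw [map_zero, ← Submodule.mkQ_apply, map_sub, map_sub, Submodule.mkQ_apply,
        Submodule.mkQ_apply, hcoordΛ]
      have h3 : e₃ (Submodule.Quotient.mk x) = fun l => Ideal.Quotient.mk P (d l) :=
        funext fun l => (hd l).symm
      rw [← h3, sub_self]
    -- the subspace X
    set v : Fin k → V := fun i => π • ((u i : ↥Pi) : V) with hv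
    set X := Submodule.span O (Set.range v) with hX
    have hvX : ∀ i, v i ∈ X := fun i => Submodule.subset_span ⟨i, rfl⟩
    have hXPPi : X ≤ P • Pi := by
      rw [hX, Submodule.span_le]
      rintro z ⟨i, rfl⟩
      exact Submodule.smul_mem_smul hπP (u i).2
    have hXform : ∀ x ∈ X, ∃ w, w ∈ Pi ∧ x = π • w := by
      intro x hx
      rw [hX] at hx
      refine Submodule.span_induction ?_ ?_ ?_ ?_ hx
      · rintro z ⟨i, rfl⟩; exact ⟨((u i : ↥Pi) : V), (u i).2, rfl⟩
      · exact ⟨0, Submodule.zero_mem Pi, (smul_zero (π : O)).symm⟩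
      · rintro z w _ _ ⟨z1, hz1, rfl⟩ ⟨w1, hw1, rfl⟩
        exact ⟨z1 + w1, Submodule.add_mem _ hz1 hw1, (smul_add (π : O) z1 w1).symm⟩
      · rintro c z _ ⟨z1, hz1, rfl⟩
        exact ⟨c • z1, Submodule.smul_mem _ c hz1, (smul_comm (π : O) c z1).symm⟩
    have hXM : X ≤ M := hXPPi.trans hPPiM
    have hXΛ : X ≤ Λ := hXM.trans hMΛ
    -- the scalar a ∈ P⁻¹ with alg j = a * alg π
    have honemem : ∀ q : O, q ∈ P → ∃ d : O, a * algebraMap O L q = algebraMap O L d := by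
      intro q hq
      have h1 : a ∈ ((P : FractionalIdeal O⁰ L)⁻¹ : FractionalIdeal O⁰ L) :=
        FractionalIdeal.mem_coe.mp haP
      have h2 : algebraMap O L q ∈ (P : FractionalIdeal O⁰ L) :=
        FractionalIdeal.mem_coeIdeal_of_mem O⁰ hq
      have h3 := FractionalIdeal.mul_mem_mul h1 h2
      rw [inv_mul_cancel₀ hPfne] at h3
      obtain ⟨d, hd⟩ := (FractionalIdeal.mem_one_iff O⁰).mp h3
      exact ⟨d, hd.symm⟩
    have hasmul : ∀ (N : Submodule O V) (z : V), z ∈ P • N → a • z ∈ N := by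
      intro N z hz
      refine Submodule.smul_induction_on hz ?_ ?_
      · intro q hq w hw
        obtain ⟨d, hd⟩ := honemem q hq
        have heq : a • (q • w) = d • w := by
          rw [← algebraMap_smul L q w, smul_smul, hd, algebraMap_smul]
        rw [heq]; exact N.smul_mem d hw
      · intro z1 z2 h1 h2
        rw [smul_add]; exact N.add_mem h1 h2
    have hjsmul : ∀ (N : Submodule O V) (w : V), π • w ∈ P • N → j • w ∈ N := by
      intro N w hw
      have heq : j • w = a • (π • w) := by
        rw [← algebraMap_smul L j w, hja, mul_smul, algebraMap_smul]
      rw [heq]; exact hasmul N _ hw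
    -- sums in each slot
    have hsuml : ∀ (s : Finset (Fin k)) (g : Fin k → V) (z : V),
        φ (∑ i ∈ s, g i) z = ∑ i ∈ s, φ (g i) z := by
      intro s g z
      induction s using Finset.cons_induction with
      | empty => simpa using hzl z
      | cons i s his ih => rw [Finset.sum_cons, Finset.sum_cons, haddl, ih]
    have hsumr : ∀ (s : Finset (Fin k)) (g : Fin k → V) (z : V),
        φ z (∑ i ∈ s, g i) = ∑ i ∈ s, φ z (g i) := by
      intro s g z
      induction s using Finset.cons_induction with
      | empty => simpa using hzr z
      | cons i s his ih => rw [Finset.sum_cons, Finset.sum_cons, haddr, ih]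
    -- integrality of pairings with π • (stuff in Pi)
    have hπPiΛ : ∀ w ∈ Pi, π • w ∈ Λ := fun w hw => hMΛ (hPPiM (Submodule.smul_mem_smul hπP hw))
    have hpairM : ∀ w ∈ Pi, ∀ m ∈ M,
        φ (π • w) m ∈ Submodule.map (Algebra.linearMap O L) (P : Submodule O O) := by
      intro w hw m hm
      rw [hsl]
      obtain ⟨c, hc⟩ := hintPi w hw m (hMPi hm)
      rw [← hc, ← map_mul]
      exact ⟨π * c, Ideal.mul_mem_right c P hπP, rfl⟩
    have hMNf : ∀ m ∈ M, ∀ x ∈ X,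
        φ x m ∈ Submodule.map (Algebra.linearMap O L) (P : Submodule O O) := by
      intro m hm x hx
      obtain ⟨w, hw, rfl⟩ := hXform x hx
      exact hpairM w hw m hm
    have hextract : ∀ c : O,
        algebraMap O L c ∈ Submodule.map (Algebra.linearMap O L) (P : Submodule O O) →
        c ∈ P := by
      rintro c ⟨t, ht, hte⟩
      have : t = c := halg hte
      rwa [← this]
    have hmulmem : ∀ (t : O) (z : L),
        z ∈ Submodule.map (Algebra.linearMap O L) (P : Submodule O O) →
        algebraMap O L t * z ∈ Submodule.map (Algebra.linearMap O L) (P : Submodule O O) := by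
      rintro t z ⟨c, hc, rfl⟩
      exact ⟨t * c, Ideal.mul_mem_left P t hc, by simp [map_mul]⟩
    -- matrix entries
    have hBex : ∀ i l : Fin k, ∃ c : O, algebraMap O L c = φ (v i) ((yy l : ↥Λ) : V) :=
      fun i l => hint _ (hπPiΛ _ (u i).2) _ (yy l).2
    choose bij hbij using hBex
    -- expansion lemmas
    have hval_l : ∀ (d : Fin k → O) (z : V),
        φ (∑ i, d i • v i) z = ∑ i, algebraMap O L (d i) * φ (v i) z := by
      intro d z; rw [hsuml]; exact Finset.sum_congr rfl fun i _ => hsl (d i) (v i) z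
    have hval_r : ∀ (d : Fin k → O) (x : V),
        φ x (∑ l, d l • ((yy l : ↥Λ) : V))
          = ∑ l, algebraMap O L (τ (d l)) * φ x ((yy l : ↥Λ) : V) := by
      intro d x; rw [hsumr]; exact Finset.sum_congr rfl fun l _ => hsr (d l) x _
    have hπsum : ∀ d : Fin k → O,
        π • (((∑ i, d i • u i : ↥Pi)) : V) = ∑ i, d i • v i := by
      intro d
      have h1 : (((∑ i, d i • u i : ↥Pi)) : V) = ∑ i, d i • ((u i : ↥Pi) : V) := by
        push_cast
        rfl
      rw [h1, Finset.smul_sum]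
      exact Finset.sum_congr rfl fun i _ => smul_comm (π : O) (d i) _
    -- left kernel of the pairing matrix is trivial
    have hwM_of : ∀ d : Fin k → O, (∀ l, (∑ i, d i * bij i l) ∈ P) →
        (∑ i, d i • u i : ↥Pi) ∈ M.comap Pi.subtype := by
      intro d hd
      set W : ↥Pi := ∑ i, d i • u i with hW
      have hWPi : (W : V) ∈ Pi := W.2
      have hφ1 : ∀ l, φ (π • (W : V)) ((yy l : ↥Λ) : V)
          ∈ Submodule.map (Algebra.linearMap O L) (P : Submodule O O) := by
        intro l
        rw [hW, hπsum d, hval_l]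
        have h1 : (∑ i, algebraMap O L (d i) * φ (v i) ((yy l : ↥Λ) : V))
            = algebraMap O L (∑ i, d i * bij i l) := by
          rw [map_sum]
          exact Finset.sum_congr rfl fun i _ => by rw [← hbij i l, ← map_mul]
        rw [h1]
        exact ⟨_, hd l, rfl⟩
      have hφ : ∀ z ∈ Λ, φ (π • (W : V)) z
          ∈ Submodule.map (Algebra.linearMap O L) (P : Submodule O O) := by
        intro z hz
        obtain ⟨e, he⟩ := hdecΛ ⟨z, hz⟩
        have hmm : ((⟨z, hz⟩ - ∑ l, e l • yy l : ↥Λ) : V) ∈ M := he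
        have hcoe : ((⟨z, hz⟩ - ∑ l, e l • yy l : ↥Λ) : V)
            = z - ∑ l, e l • ((yy l : ↥Λ) : V) := by push_cast; rfl
        have hsplit : φ (π • (W : V)) z
            = φ (π • (W : V)) (∑ l, e l • ((yy l : ↥Λ) : V))
              + φ (π • (W : V)) (((⟨z, hz⟩ - ∑ l, e l • yy l : ↥Λ) : V)) := by
          rw [hcoe, ← haddr, add_sub_cancel]
        rw [hsplit]
        apply Submodule.add_mem
        · rw [hval_r]
          exact Submodule.sum_mem _ fun l _ => hmulmem (τ (e l)) _ (hφ1 l)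
        · exact hpairM (W : V) hWPi _ hmm
      have hφ' : ∀ z ∈ Λ, φ z (π • (W : V))
          ∈ Submodule.map (Algebra.linearMap O L) (P : Submodule O O) := by
        intro z hz
        obtain ⟨t, ht, hte⟩ := hφ z hz
        rw [hherm, ← hte]
        have : σ (Algebra.linearMap O L t) = algebraMap O L (τ t) := hστ t
        rw [this]
        exact ⟨τ t, hPPbar t ht, rfl⟩
      have hπW : π • (W : V) ∈ P • Λ := hcopbar _ (hπPiΛ _ hWPi) hφ'
      have hjW : j • (W : V) ∈ Λ := hjsmul Λ _ hπW
      have hpW : p • (W : V) ∈ Λ := hMΛ (hPPiM (Submodule.smul_mem_smul hpP hWPi))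
      have hWΛ : (W : V) ∈ Λ := by
        have h1 : (W : V) = j • (W : V) + p • (W : V) := by
          rw [← add_smul, hjp1, one_smul]
        rw [h1]; exact Λ.add_mem hjW hpW
      exact Submodule.mem_comap.mpr (Submodule.mem_inf.mpr ⟨hWΛ, hWPi⟩)
    have hleft : ∀ d : Fin k → O, (∀ l, (∑ i, d i * bij i l) ∈ P) → ∀ i, d i ∈ P := by
      intro d hd i
      have h1 := hwM_of d hd
      have h2 : e₂ (Submodule.Quotient.mk (∑ i, d i • u i)) = 0 := by
        rw [(Submodule.Quotient.mk_eq_zero _).mpr h1, map_zero]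
      rw [hcoordPi] at h2
      have h3 := congrFun h2 i
      exact Ideal.Quotient.eq_zero_iff_mem.mp h3
    -- the matrix is invertible
    haveI hPmax : P.IsMaximal := hP.isMaximal hP0
    letI : Field (O ⧸ P) := Ideal.Quotient.field P
    set B : Matrix (Fin k) (Fin k) (O ⧸ P) :=
      Matrix.of fun i l => Ideal.Quotient.mk P (bij i l) with hB
    have hBvec : ∀ dd : Fin k → O ⧸ P, B.vecMul dd = 0 → dd = 0 := by
      intro dd h0
      choose d hd using fun l => Ideal.Quotient.mk_surjective (dd l)
      have key : ∀ l, Ideal.Quotient.mk P (∑ i, d i * bij i l) = (B.vecMul dd) l := by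
        intro l
        rw [map_sum, Matrix.vecMul, dotProduct]
        exact Finset.sum_congr rfl fun i _ => by
          rw [map_mul, hd i, hB]
          rfl
      have hd' : ∀ l, (∑ i, d i * bij i l) ∈ P := by
        intro l
        rw [← Ideal.Quotient.eq_zero_iff_mem, key l, h0]
        rfl
      funext l
      rw [← hd l]
      exact Ideal.Quotient.eq_zero_iff_mem.mpr (hleft d hd' l)
    have hBinj : Function.Injective B.vecMul := by
      intro x y hxy
      have h1 : B.vecMul (x - y) = 0 := by
        show Matrix.vecMul (x - y) B = 0
        rw [Matrix.sub_vecMul]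
        have hxy' : Matrix.vecMul x B = Matrix.vecMul y B := hxy
        rw [hxy', sub_self]
      exact sub_eq_zero.mp (hBvec _ h1)
    have hBmul : Function.Injective B.mulVec :=
      Matrix.mulVec_injective_iff_isUnit.mpr (Matrix.vecMul_injective_iff_isUnit.mp hBinj)
    -- right kernel: Λ ⊓ Nf X ≤ M
    have hNle : Λ ⊓ Nf X ≤ M := by
      intro z hz
      obtain ⟨hzΛ, hzN⟩ := Submodule.mem_inf.mp hz
      obtain ⟨e, he⟩ := hdecΛ ⟨z, hzΛ⟩
      have hmm : ((⟨z, hzΛ⟩ - ∑ l, e l • yy l : ↥Λ) : V) ∈ M := he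
      have hcoe : ((⟨z, hzΛ⟩ - ∑ l, e l • yy l : ↥Λ) : V)
          = z - ∑ l, e l • ((yy l : ↥Λ) : V) := by push_cast; rfl
      have key : ∀ i, (∑ l, τ (e l) * bij i l) ∈ P := by
        intro i
        have h1 : φ (v i) z ∈ Submodule.map (Algebra.linearMap O L) (P : Submodule O O) :=
          (hNf X z).mp hzN (v i) (hvX i)
        have hm2 : φ (v i) (((⟨z, hzΛ⟩ - ∑ l, e l • yy l : ↥Λ) : V))
            ∈ Submodule.map (Algebra.linearMap O L) (P : Submodule O O) :=
          hpairM ((u i : ↥Pi) : V) (u i).2 _ hmm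
        have hsplit : φ (v i) (∑ l, e l • ((yy l : ↥Λ) : V))
            = φ (v i) z - φ (v i) (((⟨z, hzΛ⟩ - ∑ l, e l • yy l : ↥Λ) : V)) := by
          rw [hcoe]
          have := haddr (v i) (∑ l, e l • ((yy l : ↥Λ) : V)) (z - ∑ l, e l • ((yy l : ↥Λ) : V))
          rw [add_sub_cancel] at this
          rw [this]; ring
        have h2 : φ (v i) (∑ l, e l • ((yy l : ↥Λ) : V))
            ∈ Submodule.map (Algebra.linearMap O L) (P : Submodule O O) := by
          rw [hsplit]; exact Submodule.sub_mem _ h1 hm2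
        rw [hval_r] at h2
        have h3 : (∑ l, algebraMap O L (τ (e l)) * φ (v i) ((yy l : ↥Λ) : V))
            = algebraMap O L (∑ l, τ (e l) * bij i l) := by
          rw [map_sum]
          exact Finset.sum_congr rfl fun l _ => by rw [← hbij i l, ← map_mul]
        rw [h3] at h2
        exact hextract _ h2
      have hvec : B.mulVec (fun l => Ideal.Quotient.mk P (τ (e l))) = 0 := by
        funext i
        have h4 : (B.mulVec (fun l => Ideal.Quotient.mk P (τ (e l)))) i
            = Ideal.Quotient.mk P (∑ l, τ (e l) * bij i l) := by
          rw [Matrix.mulVec, dotProduct, map_sum]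
          exact Finset.sum_congr rfl fun l _ => by
            rw [map_mul, hB, mul_comm]
            rfl
        rw [h4, Ideal.Quotient.eq_zero_iff_mem.mpr (key i)]
        rfl
      have h0 : (fun l => Ideal.Quotient.mk P (τ (e l))) = 0 := by
        apply hBmul
        rw [hvec, Matrix.mulVec_zero]
      have heP : ∀ l, e l ∈ P := by
        intro l
        have h1 : τ (e l) ∈ P := Ideal.Quotient.eq_zero_iff_mem.mp (congrFun h0 l)
        have h2 := hPPbar (τ (e l)) h1
        rwa [htau] at h2
      have hsumM : (∑ l, e l • ((yy l : ↥Λ) : V)) ∈ M :=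
        hPΛM (Submodule.sum_mem _ fun l _ => Submodule.smul_mem_smul (heP l) (yy l).2)
      have hzM : z ∈ M := by
        have h5 : z = (∑ l, e l • ((yy l : ↥Λ) : V))
            + (z - ∑ l, e l • ((yy l : ↥Λ) : V)) := by abel
        rw [h5]
        exact M.add_mem hsumM (hcoe ▸ hmm)
      exact hzM
    -- independence: coefficients of elements of P•X are in P
    have hindep : ∀ d : Fin k → O, (∑ i, d i • v i) ∈ P • X → ∀ i, d i ∈ P := by
      intro d hd i
      have h1 : π • ((∑ i, d i • u i : ↥Pi) : V) ∈ P • M := by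
        rw [hπsum]
        exact Submodule.smul_mono le_rfl hXM hd
      have h2 : j • ((∑ i, d i • u i : ↥Pi) : V) ∈ M := hjsmul M _ h1
      have h3 : (j • (∑ i, d i • u i) : ↥Pi) ∈ M.comap Pi.subtype := h2
      have h4 : e₂ (Submodule.Quotient.mk (j • (∑ i, d i • u i) : ↥Pi)) = 0 := by
        rw [(Submodule.Quotient.mk_eq_zero _).mpr h3, map_zero]
      have h5 : (j • (∑ i, d i • u i) : ↥Pi) = ∑ i', (j * d i') • u i' := by
        rw [Finset.smul_sum]
        exact Finset.sum_congr rfl fun i' _ => smul_smul j (d i') (u i')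
      rw [h5, hcoordPi] at h4
      have h6 := congrFun h4 i
      have h7 : j * d i ∈ P := Ideal.Quotient.eq_zero_iff_mem.mp h6
      rcases hP.mem_or_mem h7 with h | h
      · exact absurd h hjnP
      · exact h
    -- the dimension count : X/PX ≃ (O/P)^k
    set f : (Fin k → O) →ₗ[O] V :=
      { toFun := fun c => ∑ i, c i • v i
        map_add' := by
          intro c1 c2
          simp [add_smul, Finset.sum_add_distrib]
        map_smul' := by
          intro r c
          simp [Finset.smul_sum, mul_smul] } with hf
    have hfc : ∀ c : Fin k → O, f c = ∑ i, c i • v i := fun c => rfl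
    have hfX : ∀ c, f c ∈ X := by
      intro c
      rw [hfc]
      exact Submodule.sum_mem _ fun i _ => X.smul_mem _ (hvX i)
    set f' : (Fin k → O) →ₗ[O] ↥X := f.codRestrict X hfX with hf'
    set QX := P • (⊤ : Submodule O ↥X) with hQX
    set g : (Fin k → O) →ₗ[O] (Fin k → O ⧸ P) :=
      LinearMap.pi (fun i => (Submodule.mkQ (P : Submodule O O)).comp (LinearMap.proj i)) with hg
    have hmemQX : ∀ xx : ↥X, xx ∈ QX ↔ (xx : V) ∈ P • X := by
      intro xx
      constructor
      · intro hxx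
        have h2 : X.subtype xx ∈ QX.map X.subtype := Submodule.mem_map_of_mem hxx
        rwa [hQX, Submodule.map_smul'', Submodule.map_subtype_top] at h2
      · intro hxx
        have h2 : (xx : V) ∈ QX.map X.subtype := by
          rw [hQX, Submodule.map_smul'', Submodule.map_subtype_top]; exact hxx
        obtain ⟨zz, hzz, hze⟩ := h2
        rwa [show zz = xx from Subtype.ext hze] at hzz
    set hq : (Fin k → O) →ₗ[O] (↥X ⧸ QX) := QX.mkQ.comp f' with hhq
    have hhsur : Function.Surjective hq := by
      intro ξ
      obtain ⟨xx, rfl⟩ := Submodule.Quotient.mk_surjective _ ξ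
      have hxx : (xx : V) ∈ Submodule.span O (Set.range v) := by rw [← hX]; exact xx.2
      obtain ⟨c, hc⟩ := (Submodule.mem_span_range_iff_exists_fun O).mp hxx
      refine ⟨c, ?_⟩
      rw [hhq, LinearMap.comp_apply, Submodule.mkQ_apply]
      congr 1
      exact Subtype.ext hc
    have hgsur : Function.Surjective g := by
      intro ξ
      choose c hc using fun i => Ideal.Quotient.mk_surjective (ξ i)
      exact ⟨c, funext fun i => hc i⟩
    have hker : LinearMap.ker hq = LinearMap.ker g := by
      ext c
      rw [LinearMap.mem_ker, LinearMap.mem_ker]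
      constructor
      · intro hc
        have h1 : f' c ∈ QX := by
          rw [hhq, LinearMap.comp_apply, Submodule.mkQ_apply,
            Submodule.Quotient.mk_eq_zero] at hc
          exact hc
        have h2 : f c ∈ P • X := (hmemQX _).mp h1
        rw [hfc] at h2
        have h3 := hindep c h2
        funext i
        exact Ideal.Quotient.eq_zero_iff_mem.mpr (h3 i)
      · intro hc
        have h1 : ∀ i, c i ∈ P := fun i =>
          Ideal.Quotient.eq_zero_iff_mem.mp (congrFun hc i)
        have h2 : f c ∈ P • X := by
          rw [hfc]
          exact Submodule.sum_mem _ fun i _ => Submodule.smul_mem_smul (h1 i) (hvX i)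
        rw [hhq, LinearMap.comp_apply, Submodule.mkQ_apply, Submodule.Quotient.mk_eq_zero]
        exact (hmemQX _).mpr h2
    have hdim : Nonempty ((↥X ⧸ (P • (⊤ : Submodule O ↥X))) ≃ₗ[O] (Fin k → O ⧸ P)) :=
      ⟨((hq.quotKerEquivOfSurjective hhsur).symm.trans
          (Submodule.quotEquivOfEq _ _ hker)).trans (g.quotKerEquivOfSurjective hgsur)⟩
    -- isotropy
    have hiso : ∀ x ∈ X, ∀ y ∈ X, φ x y ∈
        Submodule.map (Algebra.linearMap O L) ((P * P : Ideal O) : Submodule O O) := by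
      intro x hx y hy
      obtain ⟨w, hw, rfl⟩ := hXform x hx
      obtain ⟨w', hw', rfl⟩ := hXform y hy
      rw [hsl, hsr]
      obtain ⟨c, hc⟩ := hintPi w hw w' hw'
      rw [← hc, ← map_mul, ← map_mul]
      refine ⟨π * (τ π * c), ?_, rfl⟩
      have h1 : τ π ∈ P := hPPbar π hπP
      have h2 : π * (τ π * c) = (π * τ π) * c := by ring
      rw [h2]
      exact Ideal.mul_mem_right c _ (Ideal.mul_mem_mul hπP h1)
    -- P•Pi ≤ X ⊔ P•M
    have hP2M : (P ^ 2) • Pi ≤ P • M := by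
      rw [sq, ← Ideal.smul_eq_mul, Submodule.smul_assoc]
      exact Submodule.smul_mono le_rfl hPPiM
    have hgoal5 : P • Pi ≤ X ⊔ P • M := by
      refine Submodule.smul_le.mpr fun q hq x hx => ?_
      obtain ⟨d, hd⟩ := hdecPi ⟨x, hx⟩
      have hmm : ((⟨x, hx⟩ - ∑ i, d i • u i : ↥Pi) : V) ∈ M := hd
      have hcoe : ((⟨x, hx⟩ - ∑ i, d i • u i : ↥Pi) : V)
          = x - ∑ i, d i • ((u i : ↥Pi) : V) := by push_cast; rfl
      have hxeq : q • x = (∑ i, (q * d i) • ((u i : ↥Pi) : V))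
          + q • (((⟨x, hx⟩ - ∑ i, d i • u i : ↥Pi) : V)) := by
        rw [hcoe, smul_sub, Finset.smul_sum]
        have h1 : ∀ i : Fin k, q • (d i • ((u i : ↥Pi) : V)) = (q * d i) • ((u i : ↥Pi) : V) :=
          fun i => smul_smul q (d i) _
        rw [Finset.sum_congr rfl fun i _ => h1 i]
        abel
      rw [hxeq]
      apply Submodule.add_mem
      · apply Submodule.sum_mem
        intro i _
        have hq2 : q ∈ Ideal.span {π} ⊔ P ^ 2 := hPdec ▸ hq
        obtain ⟨s, hs, r, hr, hsr2⟩ := Submodule.mem_sup.mp hq2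
        obtain ⟨t, ht⟩ := Ideal.mem_span_singleton'.mp hs
        have heq : (q * d i) • ((u i : ↥Pi) : V)
            = (t * d i) • v i + (r * d i) • ((u i : ↥Pi) : V) := by
          have hvi : v i = π • ((u i : ↥Pi) : V) := rfl
          rw [hvi, smul_smul, ← add_smul]
          congr 1
          rw [← hsr2, ← ht]
          ring
        rw [heq]
        apply Submodule.add_mem
        · exact Submodule.mem_sup_left (X.smul_mem _ (hvX i))
        · apply Submodule.mem_sup_right
          have hrd : r * d i ∈ P ^ 2 := Ideal.mul_mem_right _ _ hr
          exact hP2M (Submodule.smul_mem_smul hrd (u i).2)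
      · exact Submodule.mem_sup_right (Submodule.smul_mem_smul hq hmm)
    -- nbr X = Pi
    have hMNf' : ∀ m' ∈ M, m' ∈ Λ ⊓ Nf X := fun m' hm' =>
      Submodule.mem_inf.mpr ⟨hMΛ hm', (hNf X m').mpr fun x' hx' => hMNf m' hm' x' hx'⟩
    have hgoal6 : nbr X = Pi := by
      rw [hnbr]
      apply le_antisymm
      · apply sup_le
        · rw [Submodule.span_le]
          rintro z ⟨a', ha', x, hx, rfl⟩
          obtain ⟨w, hw, rfl⟩ := hXform x hx
          have h1 : a' ∈ ((P : FractionalIdeal O⁰ L)⁻¹ : FractionalIdeal O⁰ L) :=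
            FractionalIdeal.mem_coe.mp ha'
          have h2 : algebraMap O L π ∈ (P : FractionalIdeal O⁰ L) :=
            FractionalIdeal.mem_coeIdeal_of_mem O⁰ hπP
          have h3 := FractionalIdeal.mul_mem_mul h1 h2
          rw [inv_mul_cancel₀ hPfne] at h3
          obtain ⟨dd, hdd⟩ := (FractionalIdeal.mem_one_iff O⁰).mp h3
          have heq : a' • (π • w) = dd • w := by
            rw [← algebraMap_smul L π w, smul_smul, ← hdd, algebraMap_smul]
          rw [heq]
          exact Submodule.smul_mem Pi dd hw
        · exact le_trans hNle hMPi
      · intro x hx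
        obtain ⟨d, hd⟩ := hdecPi ⟨x, hx⟩
        have hmm : ((⟨x, hx⟩ - ∑ i, d i • u i : ↥Pi) : V) ∈ M := hd
        have hcoe : ((⟨x, hx⟩ - ∑ i, d i • u i : ↥Pi) : V)
            = x - ∑ i, d i • ((u i : ↥Pi) : V) := by push_cast; rfl
        have huNbr : ∀ i : Fin k, ((u i : ↥Pi) : V) ∈
            Submodule.span O {z : V | ∃ a' ∈
              ((((P : FractionalIdeal O⁰ L))⁻¹ : FractionalIdeal O⁰ L) : Submodule O L),
              ∃ x' ∈ X, z = a' • x'} ⊔ (Λ ⊓ Nf X) := by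
          intro i
          have h1 : ((u i : ↥Pi) : V) = j • ((u i : ↥Pi) : V) + p • ((u i : ↥Pi) : V) := by
            rw [← add_smul, hjp1, one_smul]
          rw [h1]
          apply Submodule.add_mem
          · apply Submodule.mem_sup_left
            apply Submodule.subset_span
            refine ⟨a, haP, v i, hvX i, ?_⟩
            have hvi : v i = π • ((u i : ↥Pi) : V) := rfl
            rw [hvi, ← algebraMap_smul L j ((u i : ↥Pi) : V), hja, mul_smul, algebraMap_smul]
          · exact Submodule.mem_sup_right
              (hMNf' _ (hPPiM (Submodule.smul_mem_smul hpP (u i).2)))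
        have hxeq : x = (∑ i, d i • ((u i : ↥Pi) : V))
            + (((⟨x, hx⟩ - ∑ i, d i • u i : ↥Pi) : V)) := by
          rw [hcoe]; abel
        rw [hxeq]
        apply Submodule.add_mem
        · exact Submodule.sum_mem _ fun i _ => Submodule.smul_mem _ _ (huNbr i)
        · exact Submodule.mem_sup_right (hMNf' _ hmm)
    refine ⟨X, ?_, hXPPi, hgoal5, hgoal6⟩
    unfold IsIsotropicOfDim
    refine ⟨hXΛ, ?_, hiso, hdim⟩
    rw [hX]
    exact Submodule.fg_span (Set.finite_range v)
end

section
/- A Z-linear map f : Λ → Π between Z_L-lattices in a Hermitian L-space (V, φ) is a Z_L-linear isometry if and only if each of the Q-bilinear trace forms φ_i(x,y) = Tr_{L/Q} φ(a_i x, y) is invariant under f, where a_1,…,a_d is a Z-basis of Z_L with a_1 = 1. -/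
open NumberField

private lemma trace_kill (L : Type*) [Field L] [NumberField L]
    (d : ℕ) (a : Module.Basis (Fin d) ℤ (𝓞 L)) (t : L)
    (h : ∀ i, Algebra.trace ℚ L (algebraMap (𝓞 L) L (a i) * t) = 0) : t = 0 := by
  let b : Module.Basis (Fin d) ℚ L :=
    Module.Basis.localizationLocalization ℚ (nonZeroDivisors ℤ) L a
  have hb : ∀ i, b i = algebraMap (𝓞 L) L (a i) := fun i =>
    Module.Basis.localizationLocalization_apply ℚ (nonZeroDivisors ℤ) L a i
  apply (traceForm_nondegenerate ℚ L).1 t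
  intro y
  have hz : (Algebra.traceForm ℚ L t) = 0 := by
    apply b.ext
    intro i
    simp only [Algebra.traceForm_apply, LinearMap.zero_apply, hb, mul_comm t]
    exact h i
  simp [hz]

/-- A `ℤ`-linear bijection `f : Λ → Π` between `Z_L`-lattices in a Hermitian `L`-space
`(V, φ)` is a `Z_L`-linear isometry if and only if each of the `ℚ`-bilinear trace forms
`φᵢ(x,y) = Tr_{L/ℚ} φ(aᵢ x, y)` is invariant under `f`, where `a₁, …, a_d` is a `ℤ`-basis
of `Z_L` with `a₁ = 1`. -/
theorem isometry_iff_trace_forms_invariant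
    (L : Type*) [Field L] [NumberField L]
    (σ : L ≃+* L) (hσ : ∀ a, σ (σ a) = a)
    (V : Type*) [AddCommGroup V] [Module L V] [Module (𝓞 L) V] [IsScalarTower (𝓞 L) L V]
    (φ : V → V → L)
    (haddl : ∀ x y z : V, φ (x + y) z = φ x z + φ y z)
    (hsmull : ∀ (a : L) (x y : V), φ (a • x) y = a * φ x y)
    (hherm : ∀ x y : V, φ y x = σ (φ x y))
    (hnondeg : ∀ x : V, (∀ y : V, φ x y = 0) → x = 0)
    (d : ℕ) (hd : d = Module.finrank ℚ L)
    (a : Module.Basis (Fin d) ℤ (𝓞 L)) (ha1 : ∀ (h : 0 < d), algebraMap (𝓞 L) L (a ⟨0, h⟩) = 1)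
    (Λ Pi : Submodule (𝓞 L) V)
    (hΛfull : Submodule.span L (Λ : Set V) = ⊤)
    (hPifull : Submodule.span L (Pi : Set V) = ⊤)
    (f : ↥Λ ≃ₗ[ℤ] ↥Pi) :
    ((∀ (c : 𝓞 L) (x : ↥Λ), (f (c • x) : V) = c • (f x : V)) ∧
      (∀ x y : ↥Λ, φ (f x : V) (f y : V) = φ (x : V) (y : V))) ↔
    (∀ (i : Fin d) (x y : ↥Λ),
      Algebra.trace ℚ L (φ ((algebraMap (𝓞 L) L (a i)) • (f x : V)) (f y : V)) =
      Algebra.trace ℚ L (φ ((algebraMap (𝓞 L) L (a i)) • (x : V)) (y : V))) := by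
  -- basic consequences of the axioms for φ
  have hzerol : ∀ z : V, φ 0 z = 0 := by
    intro z
    have h := haddl 0 0 z
    rw [add_zero] at h
    exact add_eq_left.mp h.symm
  have hsubl : ∀ x y z : V, φ (x - y) z = φ x z - φ y z := by
    intro x y z
    have h := haddl (x - y) y z
    rw [sub_add_cancel] at h
    exact eq_sub_of_add_eq h.symm
  constructor
  · -- forward direction
    rintro ⟨hlin, hpres⟩ i x y
    rw [hsmull, hsmull, hpres]
  · -- backward direction
    intro htr
    -- first: φ is preserved
    have hpres : ∀ x y : ↥Λ, φ (f x : V) (f y : V) = φ (x : V) (y : V) := by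
      intro x y
      have key : φ (f x : V) (f y : V) - φ (x : V) (y : V) = 0 := by
        apply trace_kill L d a
        intro i
        have h := htr i x y
        rw [hsmull, hsmull] at h
        rw [mul_sub, map_sub, h, sub_self]
      exact sub_eq_zero.mp key
    refine ⟨?_, hpres⟩
    -- 𝓞 L-linearity
    intro c x
    set w : V := (f (c • x) : V) - c • (f x : V) with hw
    have hσinj : Function.Injective σ := σ.injective
    -- φ w z = 0 for all z ∈ Pi
    have hPiz : ∀ z ∈ (Pi : Set V), φ w z = 0 := by
      rintro z hz
      obtain ⟨y, hy⟩ := f.surjective ⟨z, hz⟩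
      have hzfy : z = (f y : V) := by rw [hy]
      rw [hw, hsubl, hzfy]
      have h1 : φ (f (c • x) : V) (f y : V) = φ ((c • x : ↥Λ) : V) (y : V) := hpres _ _
      have hcoe : ((c • x : ↥Λ) : V) = (algebraMap (𝓞 L) L c) • (x : V) := by
        rw [Submodule.coe_smul, algebraMap_smul]
      have hcoe2 : c • (f x : V) = (algebraMap (𝓞 L) L c) • (f x : V) := by
        rw [algebraMap_smul]
      rw [h1, hcoe, hcoe2, hsmull, hsmull, hpres x y, sub_self]
    -- extend to all z ∈ V
    have hall : ∀ z : V, φ w z = 0 := by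
      intro z
      have hz : z ∈ Submodule.span L (Pi : Set V) := by rw [hPifull]; trivial
      induction hz using Submodule.span_induction with
      | mem z hz => exact hPiz z hz
      | zero => rw [hherm 0 w, hzerol, map_zero]
      | add z₁ z₂ _ _ h₁ h₂ =>
        have := haddl z₁ z₂ w
        have e : φ w (z₁ + z₂) = σ (φ (z₁ + z₂) w) := hherm _ _
        have e1 : φ z₁ w = σ (φ w z₁) := hherm _ _
        have e2 : φ z₂ w = σ (φ w z₂) := hherm _ _
        rw [e, this, e1, e2, h₁, h₂]
        simp
      | smul r z _ hz =>
        have e : φ w (r • z) = σ (φ (r • z) w) := hherm _ _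
        have e1 : φ z w = σ (φ w z) := hherm _ _
        rw [e, hsmull, e1, hz, map_zero, mul_zero, map_zero]
    have := hnondeg w hall
    have : (f (c • x) : V) = c • (f x : V) := by
      have h := sub_eq_zero.mp this
      exact h
    exact this
end
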